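/- The bipartite incidence graph of the clause set R₁({x,y}) = {{x,y,u}, {x,y,v}, {x,y,w}, {¬u,¬v,¬w}}—with one vertex per variable in {x,y,u,v,w}, one vertex per clause, and an edge whenever a variable occurs (positively or negatively) in a clause—contains K_{3,3} as a minor, and hence is not planar. -/

import Mathlib

/-- A literal is a sign together with a variable; `(true, v)` is the positive
literal `v` and `(false, v)` is the negative literal `¬v`. -/
abbrev Lit (V : Type*) := Bool × V

/-- A clause is a finite set of literals. -/
abbrev Clause (V : Type*) := Finset (Lit V)

/-- An assignment satisfies a clause if it makes at least one literal true. -/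
def SatClause {V : Type*} (σ : V → Bool) (C : Clause V) : Prop :=
  ∃ l ∈ C, σ l.2 = l.1

/-- An assignment satisfies a CNF formula (a collection of clauses) if it
satisfies every clause. -/
def Sat {V : Type*} (σ : V → Bool) (F : Set (Clause V)) : Prop :=
  ∀ C ∈ F, SatClause σ C

/-- A formula is satisfiable if some assignment satisfies it. -/
def Satisfiable {V : Type*} (F : Set (Clause V)) : Prop :=
  ∃ σ, Sat σ F

/-- A variable occurs (positively or negatively) in a clause. -/
def VarInClause {V : Type*} (v : V) (C : Clause V) : Prop :=
  (true, v) ∈ C ∨ (false, v) ∈ C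

/-- A variable occurs in a formula. -/
def VarInFormula {V : Type*} (v : V) (F : Set (Clause V)) : Prop :=
  ∃ C ∈ F, VarInClause v C

/-- `H` is a minor of `G`: there is a family of nonempty, pairwise disjoint,
connected branch sets in `G`, one for each vertex of `H`, such that every edge
of `H` is realized by an edge of `G` between the corresponding branch sets. -/
def SimpleGraph.IsMinorOf {β α : Type*} (H : SimpleGraph β) (G : SimpleGraph α) : Prop :=
  ∃ B : β → Set α,
    (∀ b, (B b).Nonempty) ∧
    (Pairwise fun b₁ b₂ => Disjoint (B b₁) (B b₂)) ∧
    (∀ b, (G.induce (B b)).Connected) ∧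
    ∀ ⦃b₁ b₂⦄, H.Adj b₁ b₂ → ∃ u ∈ B b₁, ∃ v ∈ B b₂, G.Adj u v

/-- Planarity, via Wagner's characterization: a graph is planar iff it has
neither `K₅` nor `K₃,₃` as a minor. -/
def SimpleGraph.IsPlanar {α : Type*} (G : SimpleGraph α) : Prop :=
  ¬ (completeGraph (Fin 5)).IsMinorOf G ∧
  ¬ (completeBipartiteGraph (Fin 3) (Fin 3)).IsMinorOf G

/-- The bipartite variable–clause incidence graph of a formula: one vertex per
variable, one vertex per clause, with an edge whenever the variable occurs
(positively or negatively) in the clause. -/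
def IncidenceGraph {V : Type*} (F : Set (Clause V)) : SimpleGraph (V ⊕ F) where
  Adj p q :=
    (∃ v C, p = Sum.inl v ∧ q = Sum.inr C ∧ VarInClause v (C : Clause V)) ∨
    (∃ v C, q = Sum.inl v ∧ p = Sum.inr C ∧ VarInClause v (C : Clause V))
  symm := by
    constructor
    rintro p q (⟨v, C, h1, h2, h3⟩ | ⟨v, C, h1, h2, h3⟩)
    · exact Or.inr ⟨v, C, h1, h2, h3⟩
    · exact Or.inl ⟨v, C, h1, h2, h3⟩
  loopless := by
    constructor
    rintro p (⟨v, C, rfl, h2, -⟩ | ⟨v, C, rfl, h2, -⟩) <;> exact Sum.inl_ne_inr h2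

/-- The clause set `R₁({x,y}) = {{x,y,u}, {x,y,v}, {x,y,w}, {¬u,¬v,¬w}}` over
the variables `x = 0`, `y = 1`, `u = 2`, `v = 3`, `w = 4`. -/
def R1Gadget : Set (Clause (Fin 5)) :=
  {({(true, 0), (true, 1), (true, 2)} : Clause (Fin 5)),
   {(true, 0), (true, 1), (true, 3)},
   {(true, 0), (true, 1), (true, 4)},
   {(false, 2), (false, 3), (false, 4)}}

namespace R1Aux

def c1 : R1Gadget := ⟨{(true, 0), (true, 1), (true, 2)}, by simp [R1Gadget]⟩
def c2 : R1Gadget := ⟨{(true, 0), (true, 1), (true, 3)}, by simp [R1Gadget]⟩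
def c3 : R1Gadget := ⟨{(true, 0), (true, 1), (true, 4)}, by simp [R1Gadget]⟩
def c4 : R1Gadget := ⟨{(false, 2), (false, 3), (false, 4)}, by simp [R1Gadget]⟩

abbrev VG := Fin 5 ⊕ R1Gadget

/-- Branch sets for the K₃,₃ minor: left = {x}, {y}, {C₄,u,v,w};
right = {C₁}, {C₂}, {C₃}. -/
def B : Fin 3 ⊕ Fin 3 → Set VG :=
  Sum.elim
    ![{Sum.inl 0}, {Sum.inl 1}, {Sum.inr c4, Sum.inl 2, Sum.inl 3, Sum.inl 4}]
    ![{Sum.inr c1}, {Sum.inr c2}, {Sum.inr c3}]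

lemma adj_var_clause (v : Fin 5) (C : R1Gadget) (h : VarInClause v (C : Clause (Fin 5))) :
    (IncidenceGraph R1Gadget).Adj (Sum.inl v) (Sum.inr C) :=
  Or.inl ⟨v, C, rfl, rfl, h⟩

lemma h14 : c1 ≠ c4 := fun h => absurd (congrArg Subtype.val h) (by decide)
lemma h24 : c2 ≠ c4 := fun h => absurd (congrArg Subtype.val h) (by decide)
lemma h34 : c3 ≠ c4 := fun h => absurd (congrArg Subtype.val h) (by decide)
lemma h12 : c1 ≠ c2 := fun h => absurd (congrArg Subtype.val h) (by decide)
lemma h13 : c1 ≠ c3 := fun h => absurd (congrArg Subtype.val h) (by decide)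
lemma h23 : c2 ≠ c3 := fun h => absurd (congrArg Subtype.val h) (by decide)

lemma big_connected : ((IncidenceGraph R1Gadget).induce (B (Sum.inl 2))).Connected := by
  have hc4 : (Sum.inr c4 : VG) ∈ B (Sum.inl 2) := by simp [B]
  have key : ∀ z : (B (Sum.inl 2)).Elem,
      ((IncidenceGraph R1Gadget).induce _).Reachable z ⟨Sum.inr c4, hc4⟩ := by
    rintro ⟨z, hz⟩
    simp only [B, Sum.elim_inl, Matrix.cons_val_two, Matrix.tail_cons, Matrix.head_cons,
      Set.mem_insert_iff, Set.mem_singleton_iff] at hz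
    rcases hz with rfl | rfl | rfl | rfl
    · rfl
    · exact SimpleGraph.Adj.reachable (adj_var_clause 2 c4 (Or.inr (by simp [c4])))
    · exact SimpleGraph.Adj.reachable (adj_var_clause 3 c4 (Or.inr (by simp [c4])))
    · exact SimpleGraph.Adj.reachable (adj_var_clause 4 c4 (Or.inr (by simp [c4])))
  have : Nonempty (B (Sum.inl 2)).Elem := ⟨⟨Sum.inr c4, hc4⟩⟩
  exact ⟨fun a b => (key a).trans (key b).symm⟩

lemma single_connected (x : VG) : ((IncidenceGraph R1Gadget).induce {x}).Connected := by
  have : Nonempty ({x} : Set VG).Elem := ⟨⟨x, rfl⟩⟩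
  exact ⟨by rintro ⟨a, rfl⟩ ⟨b, rfl⟩; rfl⟩

lemma edge (i j : Fin 3) :
    ∃ u ∈ B (Sum.inl i), ∃ v ∈ B (Sum.inr j), (IncidenceGraph R1Gadget).Adj u v := by
  fin_cases i <;> fin_cases j
  · exact ⟨_, by simp [B], _, by simp [B], adj_var_clause 0 c1 (Or.inl (by simp [c1]))⟩
  · exact ⟨_, by simp [B], _, by simp [B], adj_var_clause 0 c2 (Or.inl (by simp [c2]))⟩
  · exact ⟨_, by simp [B], _, by simp [B], adj_var_clause 0 c3 (Or.inl (by simp [c3]))⟩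
  · exact ⟨_, by simp [B], _, by simp [B], adj_var_clause 1 c1 (Or.inl (by simp [c1]))⟩
  · exact ⟨_, by simp [B], _, by simp [B], adj_var_clause 1 c2 (Or.inl (by simp [c2]))⟩
  · exact ⟨_, by simp [B], _, by simp [B], adj_var_clause 1 c3 (Or.inl (by simp [c3]))⟩
  · exact ⟨Sum.inl 2, by simp [B], _, by simp [B], adj_var_clause 2 c1 (Or.inl (by simp [c1]))⟩
  · exact ⟨Sum.inl 3, by simp [B], _, by simp [B], adj_var_clause 3 c2 (Or.inl (by simp [c2]))⟩
  · exact ⟨Sum.inl 4, by simp [B], _, by simp [B], adj_var_clause 4 c3 (Or.inl (by simp [c3]))⟩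

lemma k33_minor :
    (completeBipartiteGraph (Fin 3) (Fin 3)).IsMinorOf (IncidenceGraph R1Gadget) := by
  refine ⟨B, ?_, ?_, ?_, ?_⟩
  · rintro (b | b) <;> fin_cases b <;> simp [B]
  · rintro (b₁ | b₁) (b₂ | b₂) hne12 <;> fin_cases b₁ <;> fin_cases b₂ <;>
      simp_all [B, Set.disjoint_left, h14, h24, h34, h12, h13, h23,
        h14.symm, h24.symm, h34.symm, h12.symm, h13.symm, h23.symm,
        Fin.ext_iff, c1, c2, c3, c4, Subtype.ext_iff] <;> decide
  · rintro (b | b) <;> fin_cases b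
    · exact single_connected (Sum.inl 0)
    · exact single_connected (Sum.inl 1)
    · exact big_connected
    · exact single_connected (Sum.inr c1)
    · exact single_connected (Sum.inr c2)
    · exact single_connected (Sum.inr c3)
  · rintro (b₁ | b₁) (b₂ | b₂) hadj
    · simp [completeBipartiteGraph] at hadj
    · exact edge b₁ b₂
    · obtain ⟨u, hu, v, hv, huv⟩ := edge b₂ b₁
      exact ⟨v, hv, u, hu, huv.symm⟩
    · simp [completeBipartiteGraph] at hadj

end R1Aux

/-- The bipartite incidence graph of `R₁({x,y})` contains `K₃,₃` as a minor
and hence is not planar. -/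
theorem r1_gadget_not_planar :
    (completeBipartiteGraph (Fin 3) (Fin 3)).IsMinorOf (IncidenceGraph R1Gadget) ∧
    ¬ (IncidenceGraph R1Gadget).IsPlanar := by
  exact ⟨R1Aux.k33_minor, fun h => h.2 R1Aux.k33_minor⟩
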